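/- Let F_n be as above and let φ_2(F_n) denote the largest k such that 2^k divides every coefficient of F_n. Then φ_2(F_n) = ν_2(n) + 3 for every positive integer n, where ν_2 is the 2-adic valuation. -/

import Mathlib

open MvPolynomial

private lemma prodXpow (k : Fin 3 → ℕ) :
    (∏ i, (X i : MvPolynomial (Fin 3) ℤ) ^ k i)
      = monomial (Finsupp.equivFunOnFinite.symm k) 1 := by
  have h : (Finsupp.single 0 (k 0) + Finsupp.single 1 (k 1) + Finsupp.single 2 (k 2) : Fin 3 →₀ ℕ)
      = Finsupp.equivFunOnFinite.symm k := by
    ext i; fin_cases i <;> simp [Finsupp.single_apply]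
  rw [Fin.prod_univ_three, X_pow_eq_monomial, X_pow_eq_monomial, X_pow_eq_monomial,
    monomial_mul, monomial_mul, h]
  norm_num

private lemma coeffPow (ε : Fin 3 → ℤ) (N : ℕ) (d : Fin 3 →₀ ℕ) :
    coeff d ((∑ i, C (ε i) * X i) ^ N)
      = if d 0 + d 1 + d 2 = N then
          (Nat.multinomial Finset.univ ⇑d : ℤ) * (ε 0 ^ d 0 * ε 1 ^ d 1 * ε 2 ^ d 2) else 0 := by
  rw [Finset.sum_pow_eq_sum_piAntidiag]
  have h1 : ∀ k : Fin 3 → ℕ,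
      (Nat.multinomial Finset.univ k : MvPolynomial (Fin 3) ℤ) * ∏ i, (C (ε i) * X i) ^ k i
      = monomial (Finsupp.equivFunOnFinite.symm k)
          ((Nat.multinomial Finset.univ k : ℤ) * ∏ i, ε i ^ k i) := by
    intro k
    have h2 : (∏ i, (C (ε i) * X i) ^ k i : MvPolynomial (Fin 3) ℤ)
        = C (∏ i, ε i ^ k i) * ∏ i, (X i : MvPolynomial (Fin 3) ℤ) ^ k i := by
      rw [map_prod, ← Finset.prod_mul_distrib]
      exact Finset.prod_congr rfl fun i _ => by rw [mul_pow, map_pow]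
    rw [h2, prodXpow, C_mul_monomial, mul_one, ← map_natCast (C : ℤ →+* MvPolynomial (Fin 3) ℤ),
      C_mul_monomial]
  simp_rw [h1]
  rw [coeff_sum]
  simp_rw [coeff_monomial]
  have h3 : ∀ k : Fin 3 → ℕ, (Finsupp.equivFunOnFinite.symm k = d) ↔ (k = ⇑d) := by
    intro k
    rw [Equiv.symm_apply_eq]
    rfl
  rw [Finset.sum_congr rfl (fun k _ => if_congr (h3 k) rfl rfl)]
  rw [Finset.sum_ite_eq' (Finset.piAntidiag Finset.univ N) ⇑d]
  have h4 : (⇑d ∈ Finset.univ.piAntidiag N) ↔ d 0 + d 1 + d 2 = N := by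
    rw [Finset.mem_piAntidiag]
    simp [Fin.sum_univ_three]
  rw [if_congr h4 (by rw [Fin.prod_univ_three]) rfl]

private lemma coeffF (N : ℕ) (d : Fin 3 →₀ ℕ) :
    coeff d ((X 0 + X 1 + X 2 : MvPolynomial (Fin 3) ℤ) ^ N + (-X 0 + X 2 - X 1) ^ N
        + (X 0 - X 1 - X 2) ^ N + (-X 0 + X 1 - X 2) ^ N)
      = if d 0 + d 1 + d 2 = N then
          (Nat.multinomial Finset.univ ⇑d : ℤ) *
            (1 + (-1) ^ (d 0 + d 1) + (-1) ^ (d 1 + d 2) + (-1) ^ (d 0 + d 2)) else 0 := by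
  have e1 : (X 0 + X 1 + X 2 : MvPolynomial (Fin 3) ℤ) = ∑ i, C (![1,1,1] i) * X i := by
    rw [Fin.sum_univ_three]; simp
  have e2 : (-X 0 + X 2 - X 1 : MvPolynomial (Fin 3) ℤ) = ∑ i, C (![-1,-1,1] i) * X i := by
    rw [Fin.sum_univ_three]; simp; ring
  have e3 : (X 0 - X 1 - X 2 : MvPolynomial (Fin 3) ℤ) = ∑ i, C (![1,-1,-1] i) * X i := by
    rw [Fin.sum_univ_three]; simp; ring
  have e4 : (-X 0 + X 1 - X 2 : MvPolynomial (Fin 3) ℤ) = ∑ i, C (![-1,1,-1] i) * X i := by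
    rw [Fin.sum_univ_three]; simp; ring
  rw [e1, e2, e3, e4, coeff_add, coeff_add, coeff_add, coeffPow, coeffPow, coeffPow, coeffPow]
  simp only [Matrix.cons_val_zero, Matrix.cons_val_one, Matrix.head_cons, Matrix.cons_val_two,
    Matrix.tail_cons]
  split_ifs with h
  · rw [pow_add, pow_add, pow_add]
    ring
  · ring

private lemma mult3 (g : Fin 3 → ℕ) :
    Nat.multinomial Finset.univ g
      = (g 0 + (g 1 + g 2)).choose (g 0) * (g 1 + g 2).choose (g 1) := by
  have h : (Finset.univ : Finset (Fin 3)) = insert 0 {1, 2} := by decide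
  rw [h, Nat.multinomial_insert (by decide), Nat.binomial_eq_choose (by decide),
    Finset.sum_pair (by decide)]

private lemma odd_cancel {t b x : ℕ} (hb : Odd b) (h : 2 ^ t ∣ b * x) : 2 ^ t ∣ x :=
  (Nat.Coprime.pow_left t (Nat.coprime_two_left.mpr hb)).dvd_of_dvd_mul_left h

private lemma key_dvd (n m b : ℕ) (hn : 0 < n) (hm : 0 < m) (hb : Odd b) :
    2 ^ (padicValNat 2 n + 1) ∣ Nat.choose (2 * n + 1) (2 * m) * Nat.choose (2 * m) b := by
  haveI : Fact (Nat.Prime 2) := ⟨Nat.prime_two⟩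
  set v := padicValNat 2 n with hv
  set t := padicValNat 2 (2 * m) with ht
  have hm0 : 2 * m ≠ 0 := by omega
  -- Step A : 2^t ∣ C(2m, b)
  have hb1 : 1 ≤ b := hb.pos
  have eA : 2 * m * Nat.choose (2 * m - 1) (b - 1) = Nat.choose (2 * m) b * b := by
    have := Nat.add_one_mul_choose_eq (2 * m - 1) (b - 1)
    rwa [Nat.sub_add_cancel (by omega),
      Nat.sub_add_cancel hb1] at this
  have hA : 2 ^ t ∣ Nat.choose (2 * m) b := by
    apply odd_cancel hb
    rw [mul_comm, ← eA]
    exact Dvd.dvd.mul_right pow_padicValNat_dvd _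
  -- Step B : 2^(v+1) ∣ C(2n, 2m-1)
  have hv2n : padicValNat 2 (2 * n) = v + 1 := by
    rw [padicValNat.mul two_ne_zero (by omega), padicValNat.self (by norm_num)]
    omega
  have eB : 2 * n * Nat.choose (2 * n - 1) (2 * m - 2)
      = Nat.choose (2 * n) (2 * m - 1) * (2 * m - 1) := by
    have := Nat.add_one_mul_choose_eq (2 * n - 1) (2 * m - 2)
    rwa [Nat.sub_add_cancel (by omega),
      show 2 * m - 2 + 1 = 2 * m - 1 by omega] at this
  have hB : 2 ^ (v + 1) ∣ Nat.choose (2 * n) (2 * m - 1) := by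
    apply odd_cancel (x := Nat.choose (2 * n) (2 * m - 1)) (b := 2 * m - 1)
      (by rw [Nat.odd_iff]; omega)
    rw [mul_comm, ← eB]
    have h2n : (2:ℕ) ^ (v + 1) ∣ 2 * n := by rw [← hv2n]; exact pow_padicValNat_dvd
    exact h2n.mul_right _
  -- Step C : 2^(v+1) ∣ C(2n+1, 2m) * 2m
  have eC : (2 * n + 1) * Nat.choose (2 * n) (2 * m - 1)
      = Nat.choose (2 * n + 1) (2 * m) * (2 * m) := by
    have := Nat.add_one_mul_choose_eq (2 * n) (2 * m - 1)
    rwa [Nat.sub_add_cancel (by omega)] at this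
  have hC : 2 ^ (v + 1) ∣ Nat.choose (2 * n + 1) (2 * m) * (2 * m) := by
    rw [← eC]; exact hB.mul_left _
  by_cases hcase : t ≤ v
  · obtain ⟨u, hu⟩ := (pow_padicValNat_dvd : 2 ^ t ∣ 2 * m)
    have hu_odd : Odd u := by
      rw [Nat.odd_iff]
      by_contra hcon
      have : (2:ℕ) ^ (t + 1) ∣ 2 * m := by
        obtain ⟨w, hw⟩ : 2 ∣ u := by omega
        exact ⟨w, by rw [hu, hw]; ring⟩
      exact pow_succ_padicValNat_not_dvd hm0 this
    have hC2 : 2 ^ (v + 1) ∣ Nat.choose (2 * n + 1) (2 * m) * 2 ^ t := by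
      apply odd_cancel hu_odd
      calc 2 ^ (v+1) ∣ Nat.choose (2 * n + 1) (2 * m) * (2 * m) := hC
        _ = u * (Nat.choose (2 * n + 1) (2 * m) * 2 ^ t) := by rw [hu]; ring
    have hC3 : 2 ^ (v + 1 - t) ∣ Nat.choose (2 * n + 1) (2 * m) := by
      have h2 : 2 ^ (v + 1 - t) * 2 ^ t ∣ Nat.choose (2 * n + 1) (2 * m) * 2 ^ t := by
        rw [← pow_add, show v + 1 - t + t = v + 1 by omega]; exact hC2
      exact (Nat.mul_dvd_mul_iff_right (pow_pos (by norm_num) t)).mp h2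
    calc (2:ℕ) ^ (v + 1) = 2 ^ (v + 1 - t) * 2 ^ t := by
          rw [← pow_add]; congr 1; omega
      _ ∣ _ := mul_dvd_mul hC3 hA
  · have : 2 ^ (v + 1) ∣ Nat.choose (2 * m) b :=
      dvd_trans (pow_dvd_pow 2 (by omega)) hA
    exact this.mul_left _

theorem stmt_14 (n : ℕ) (hn : 0 < n) :
    let x : MvPolynomial (Fin 3) ℤ := X 0
    let y : MvPolynomial (Fin 3) ℤ := X 1
    let z : MvPolynomial (Fin 3) ℤ := X 2
    let F := (x + y + z)^(2*n+1) + (-x + z - y)^(2*n+1)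
        + (x - y - z)^(2*n+1) + (-x + y - z)^(2*n+1)
    IsGreatest {k : ℕ | ∀ d : Fin 3 →₀ ℕ, (2:ℤ)^k ∣ F.coeff d}
      (padicValNat 2 n + 3) := by
  intro x y z F
  haveI : Fact (Nat.Prime 2) := ⟨Nat.prime_two⟩
  set v := padicValNat 2 n with hv
  have hF : ∀ d : Fin 3 →₀ ℕ, F.coeff d
      = if d 0 + d 1 + d 2 = 2*n+1 then
          (Nat.multinomial Finset.univ ⇑d : ℤ) *
            (1 + (-1) ^ (d 0 + d 1) + (-1) ^ (d 1 + d 2) + (-1) ^ (d 0 + d 2)) else 0 :=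
    fun d => coeffF (2*n+1) d
  constructor
  · -- membership
    intro d
    rw [hF d]
    split_ifs with h
    · rcases Nat.even_or_odd (d 0) with ha | ha <;> rcases Nat.even_or_odd (d 2) with hc | hc
      · -- a even, c even → b odd
        rw [Nat.even_iff] at ha hc
        have hab : Odd (d 0 + d 1) := by rw [Nat.odd_iff]; omega
        have hbc : Odd (d 1 + d 2) := by rw [Nat.odd_iff]; omega
        have hac : Even (d 0 + d 2) := by rw [Nat.even_iff]; omega
        rw [hab.neg_one_pow, hbc.neg_one_pow, hac.neg_one_pow]
        norm_num
      · -- a even, c odd → b even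
        rw [Nat.even_iff] at ha; rw [Nat.odd_iff] at hc
        have hab : Even (d 0 + d 1) := by rw [Nat.even_iff]; omega
        have hbc : Odd (d 1 + d 2) := by rw [Nat.odd_iff]; omega
        have hac : Odd (d 0 + d 2) := by rw [Nat.odd_iff]; omega
        rw [hab.neg_one_pow, hbc.neg_one_pow, hac.neg_one_pow]
        norm_num
      · -- a odd, c even → b even
        rw [Nat.odd_iff] at ha; rw [Nat.even_iff] at hc
        have hab : Odd (d 0 + d 1) := by rw [Nat.odd_iff]; omega
        have hbc : Even (d 1 + d 2) := by rw [Nat.even_iff]; omega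
        have hac : Odd (d 0 + d 2) := by rw [Nat.odd_iff]; omega
        rw [hab.neg_one_pow, hbc.neg_one_pow, hac.neg_one_pow]
        norm_num
      · -- all odd : the main case
        rw [Nat.odd_iff] at ha hc
        have hb : d 1 % 2 = 1 := by omega
        have hab : Even (d 0 + d 1) := by rw [Nat.even_iff]; omega
        have hbc : Even (d 1 + d 2) := by rw [Nat.even_iff]; omega
        have hac : Even (d 0 + d 2) := by rw [Nat.even_iff]; omega
        rw [hab.neg_one_pow, hbc.neg_one_pow, hac.neg_one_pow]
        obtain ⟨m, hm⟩ : ∃ m, d 1 + d 2 = 2 * m := ⟨(d 1 + d 2)/2, by omega⟩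
        have hmult : Nat.multinomial Finset.univ ⇑d
            = Nat.choose (2 * n + 1) (2 * m) * Nat.choose (2 * m) (d 1) := by
          rw [mult3 ⇑d]
          congr 1
          rw [show d 0 + (d 1 + d 2) = 2 * n + 1 by omega,
            show d 0 = 2 * n + 1 - 2 * m by omega]
          exact Nat.choose_symm (by omega)
          rw [hm]
        rw [hmult]
        have hkey := key_dvd n m (d 1) hn (by omega) (by rw [Nat.odd_iff]; exact hb)
        obtain ⟨w, hw⟩ := hkey
        rw [hw]
        push_cast
        rw [show v + 3 = (v + 1) + 2 by omega, pow_add]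
        ring_nf
        exact ⟨w, by ring⟩
    · exact dvd_zero _
  · -- upper bound
    intro k hk
    have hd := hk (Finsupp.equivFunOnFinite.symm ![2*n-1, 1, 1])
    rw [hF] at hd
    have hval : ∀ i, (Finsupp.equivFunOnFinite.symm ![2*n-1, 1, 1] : Fin 3 →₀ ℕ) i
        = ![2*n-1, 1, 1] i := fun i => rfl
    rw [hval 0, hval 1, hval 2] at hd
    simp only [Matrix.cons_val_zero, Matrix.cons_val_one, Matrix.head_cons, Matrix.cons_val_two,
      Matrix.tail_cons] at hd
    rw [if_pos (by omega)] at hd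
    have hmult : Nat.multinomial Finset.univ
        ⇑(Finsupp.equivFunOnFinite.symm ![2*n-1, 1, 1]) = (2 * n + 1) * n * 2 := by
      rw [mult3]
      have h0 : (⇑(Finsupp.equivFunOnFinite.symm ![2*n-1, 1, 1]) : Fin 3 → ℕ) = ![2*n-1,1,1] :=
        rfl
      rw [h0]
      simp only [Matrix.cons_val_zero, Matrix.cons_val_one, Matrix.head_cons, Matrix.cons_val_two,
        Matrix.tail_cons]
      rw [show 2*n-1 + (1+1) = 2*n+1 by omega, show (2*n-1 : ℕ) = 2*n+1 - 2 by omega,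
        Nat.choose_symm (by omega), Nat.choose_two_right, Nat.choose_one_right]
      rw [show 2*n+1-1 = 2*n by omega]
      rw [show (2*n+1) * (2*n) = ((2*n+1) * n) * 2 by ring, Nat.mul_div_cancel _ (by norm_num)]
    rw [hmult] at hd
    have he1 : Even (2*n-1 + 1) := by rw [Nat.even_iff]; omega
    have he2 : Even (1 + 1 : ℕ) := by decide
    rw [he1.neg_one_pow, he2.neg_one_pow] at hd
    have hdn : 2^k ∣ 8 * (n * (2*n+1)) := by
      have hint : ((2:ℤ))^k ∣ ((8 * (n * (2*n+1)) : ℕ) : ℤ) := by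
        convert hd using 1
        push_cast
        ring
      exact_mod_cast hint
    have hMval : padicValNat 2 (8 * (n * (2*n+1))) = v + 3 := by
      have h1 : padicValNat 2 (2*n+1) = 0 := padicValNat.eq_zero_of_not_dvd (by omega)
      have h8 : padicValNat 2 8 = 3 := by
        rw [show (8:ℕ) = 2^3 by norm_num]
        exact padicValNat.prime_pow 3
      have h2 : padicValNat 2 (8 * (n * (2*n+1)))
          = padicValNat 2 8 + (padicValNat 2 n + padicValNat 2 (2*n+1)) := by
        rw [padicValNat.mul (by norm_num) (by positivity),
          padicValNat.mul (by omega) (by omega)]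
      omega
    by_contra hcon
    have hk4 : v + 3 + 1 ≤ k := by omega
    have : 2 ^ (padicValNat 2 (8 * (n * (2*n+1))) + 1) ∣ 8 * (n * (2*n+1)) := by
      rw [hMval]
      exact dvd_trans (pow_dvd_pow 2 hk4) hdn
    exact pow_succ_padicValNat_not_dvd (by positivity) this
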